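/- Let $n, k$ be positive integers with $\gcd(k,n)=1$ and let $F$ be a finite field with $2^n$ elements. Then there is no nonempty set $S$ of at most four distinct nonzero elements of $F$ such that $\sum_{x \in S} x = 0$ and $\sum_{x \in S} x^{2^k+1} = 0$. (Equivalently, the cyclic code of length $2^n-1$ with zero set $\{1, 2^k+1\}$ has minimum distance at least $5$, i.e., it is double-error-correcting.) -/

import Mathlib

/-- gcd(2^k-1, 2^n-1) = 1 when gcd(k,n) = 1. -/
lemma aux_gcd_pow_sub_one (k n : ℕ) (hgcd : Nat.gcd k n = 1) :
    Nat.gcd (2 ^ k - 1) (2 ^ n - 1) = 1 := by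
  set d := Nat.gcd (2 ^ k - 1) (2 ^ n - 1) with hd
  have hdk : d ∣ 2 ^ k - 1 := Nat.gcd_dvd_left _ _
  have hdn : d ∣ 2 ^ n - 1 := Nat.gcd_dvd_right _ _
  have h1k : (1 : ℕ) ≤ 2 ^ k := Nat.one_le_two_pow
  have h1n : (1 : ℕ) ≤ 2 ^ n := Nat.one_le_two_pow
  have hmk : (2 ^ k) ≡ 1 [MOD d] := ((Nat.modEq_iff_dvd' h1k).mpr hdk).symm
  have hmn : (2 ^ n) ≡ 1 [MOD d] := ((Nat.modEq_iff_dvd' h1n).mpr hdn).symm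
  have hck : ((2 : ZMod d)) ^ k = 1 := by
    have := (ZMod.natCast_eq_natCast_iff _ _ _).mpr hmk
    push_cast at this
    exact this
  have hcn : ((2 : ZMod d)) ^ n = 1 := by
    have := (ZMod.natCast_eq_natCast_iff _ _ _).mpr hmn
    push_cast at this
    exact this
  have hor : orderOf (2 : ZMod d) ∣ Nat.gcd k n :=
    Nat.dvd_gcd (orderOf_dvd_of_pow_eq_one hck) (orderOf_dvd_of_pow_eq_one hcn)
  rw [hgcd, Nat.dvd_one] at hor
  have h21 : (2 : ZMod d) = 1 := by
    have := pow_orderOf_eq_one (2 : ZMod d)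
    rwa [hor, pow_one] at this
  have : ((2 : ℕ) : ZMod d) = ((1 : ℕ) : ZMod d) := by push_cast; exact h21
  have hmod : (2 : ℕ) ≡ 1 [MOD d] := (ZMod.natCast_eq_natCast_iff _ _ _).mp this
  have : d ∣ 2 - 1 := (Nat.modEq_iff_dvd' (by norm_num)).mp hmod.symm
  simpa using this

theorem stmt_8 (n k : ℕ) (hn : 0 < n) (hk : 0 < k) (hgcd : Nat.gcd k n = 1)
    (F : Type*) [Field F] [Fintype F] (hF : Fintype.card F = 2 ^ n) :
    ¬ ∃ S : Finset F, S.Nonempty ∧ S.card ≤ 4 ∧ (0 : F) ∉ S ∧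
      ∑ x ∈ S, x = 0 ∧
      ∑ x ∈ S, x ^ (2 ^ k + 1) = 0 := by
  classical
  -- characteristic 2
  haveI hchar : CharP F 2 := by
    haveI := ringChar.charP F
    obtain ⟨m, hp, hcard⟩ := FiniteField.card F (ringChar F)
    have h2 : ringChar F = 2 := by
      have hdvd : ringChar F ∣ 2 ^ n := by
        rw [← hF, hcard]
        exact dvd_pow_self _ (by positivity)
      exact (Nat.prime_dvd_prime_iff_eq hp Nat.prime_two).mp (hp.dvd_of_dvd_pow hdvd)
    rwa [h2] at this
  haveI : ExpChar F 2 := ExpChar.prime Nat.prime_two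
  set q : ℕ := 2 ^ k with hq
  have h2z : (2 : F) = 0 := by
    have := CharP.cast_eq_zero F 2; push_cast at this; exact this
  have hfr : ∀ u v : F, (u + v) ^ q = u ^ q + v ^ q := fun u v =>
    add_pow_expChar_pow u v 2 k
  have hq1 : 1 ≤ q := Nat.one_le_two_pow
  -- key lemma: a*d^q + a^q*d = 0 with a ≠ 0 forces d = 0 or d = a
  have key : ∀ a d : F, a ≠ 0 → a * d ^ q + a ^ q * d = 0 → d = 0 ∨ d = a := by
    intro a d ha h
    by_cases hd : d = 0
    · exact Or.inl hd
    right
    set t : F := d * a⁻¹ with ht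
    have ht0 : t ≠ 0 := mul_ne_zero hd (inv_ne_zero ha)
    have heq : a * d ^ q = a ^ q * d := by
      have h' := eq_neg_of_add_eq_zero_left h
      rwa [CharTwo.neg_eq] at h'
    have haq : a ^ q ≠ 0 := pow_ne_zero _ ha
    have htq : t ^ q = t := by
      apply mul_right_cancel₀ (mul_ne_zero haq ha)
      rw [ht, mul_pow, inv_pow]
      field_simp
      linear_combination heq
    have htq1 : t ^ (q - 1) = 1 := by
      have : t ^ (q - 1) * t = 1 * t := by
        rw [one_mul, ← pow_succ, Nat.sub_add_cancel hq1, htq]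
      exact mul_right_cancel₀ ht0 this
    have htn : t ^ (2 ^ n - 1) = 1 := by
      have := FiniteField.pow_card_sub_one_eq_one t ht0
      rwa [hF] at this
    have hord : orderOf t ∣ Nat.gcd (2 ^ k - 1) (2 ^ n - 1) :=
      Nat.dvd_gcd (orderOf_dvd_of_pow_eq_one htq1) (orderOf_dvd_of_pow_eq_one htn)
    rw [aux_gcd_pow_sub_one k n hgcd, Nat.dvd_one] at hord
    have ht1 : t = 1 := by
      have := pow_orderOf_eq_one t
      rwa [hord, pow_one] at this
    have : d * a⁻¹ = 1 := ht1
    field_simp at this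
    exact this
  -- now the main argument
  rintro ⟨S, hne, hcard, h0, hs1, hsq⟩
  have hpos : 1 ≤ S.card := Finset.card_pos.mpr hne
  interval_cases h : S.card
  · -- card 1
    obtain ⟨x, hx⟩ := Finset.card_eq_one.mp h
    subst hx
    simp at hs1
    subst hs1
    simp at h0
  · -- card 2
    obtain ⟨x, y, hxy, hx⟩ := Finset.card_eq_two.mp h
    subst hx
    rw [Finset.sum_insert (by simpa using hxy), Finset.sum_singleton] at hs1
    have := eq_neg_of_add_eq_zero_left hs1
    rw [CharTwo.neg_eq] at this
    exact hxy this
  · -- card 3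
    obtain ⟨x, y, z, hxy, hxz, hyz, hx⟩ := Finset.card_eq_three.mp h
    subst hx
    have hx0 : x ≠ 0 := fun hh => h0 (by simp [hh])
    have hy0 : y ≠ 0 := fun hh => h0 (by simp [hh])
    rw [Finset.sum_insert (by simp [hxy, hxz]),
        Finset.sum_insert (by simp [hyz]), Finset.sum_singleton] at hs1 hsq
    have hz : z = x + y := by linear_combination hs1 - (x + y) * h2z
    rw [hz] at hsq
    simp only [pow_succ] at hsq
    rw [hfr x y] at hsq
    have hmain : x * y ^ q + x ^ q * y = 0 := by
      linear_combination hsq - (x ^ q * x + y ^ q * y) * h2z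
    rcases key x y hx0 hmain with h1 | h1
    · exact hy0 h1
    · exact hxy h1.symm
  · -- card 4
    obtain ⟨a, ha⟩ := hne
    have h3 : (S.erase a).card = 3 := by rw [Finset.card_erase_of_mem ha, h]
    obtain ⟨b, c, d, hbc, hbd, hcd, hS'⟩ := Finset.card_eq_three.mp h3
    have hab : a ≠ b := fun hh => (Finset.notMem_erase a S) (hS' ▸ (by simp [hh.symm] : a ∈ ({b, c, d} : Finset F)))
    have hac : a ≠ c := fun hh => (Finset.notMem_erase a S) (hS' ▸ (by simp [hh.symm] : a ∈ ({b, c, d} : Finset F)))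
    have had : a ≠ d := fun hh => (Finset.notMem_erase a S) (hS' ▸ (by simp [hh.symm] : a ∈ ({b, c, d} : Finset F)))
    have hSeq : S = insert a ({b, c, d} : Finset F) := by
      rw [← hS', Finset.insert_erase ha]
    rw [hSeq] at hs1 hsq
    rw [Finset.sum_insert (by simp [hab, hac, had]),
        Finset.sum_insert (by simp [hbc, hbd]),
        Finset.sum_insert (by simp [hcd]), Finset.sum_singleton] at hs1 hsq
    have hs : a + b ≠ 0 := by
      intro hh
      have := eq_neg_of_add_eq_zero_left hh
      rw [CharTwo.neg_eq] at this
      exact hab this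
    have hdval : d = a + b + c := by linear_combination hs1 - (a + b + c) * h2z
    rw [hdval] at hsq
    simp only [pow_succ] at hsq
    rw [show a + b + c = (a + b) + c by ring, hfr (a + b) c, hfr a b] at hsq
    have hmain : (a + b) * (a + c) ^ q + (a + b) ^ q * (a + c) = 0 := by
      rw [hfr a c, hfr a b]
      linear_combination hsq - (b ^ q * b + c ^ q * c) * h2z
    rcases key (a + b) (a + c) hs hmain with h1 | h1
    · have := eq_neg_of_add_eq_zero_left h1
      rw [CharTwo.neg_eq] at this
      exact hac this
    · have : c = b := by
        have := add_left_cancel h1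
        exact this
      exact hbc this.symm
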